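/- With Q_{r,j} := e_{r-j}(Y - {x_{r-j},...,x_r}) for j = 0,...,r-1 in the ring R = ℤ[x_1,...,x_r] ⊗ ℤ[y_1,...,y_r]^{S_r}, the sequence Q_{r,0}, Q_{r,1}, ..., Q_{r,r-1} is a regular sequence in R. -/

import Mathlib

open MvPolynomial

/-- The elementary symmetric polynomial `e_n` in the set of variables `s`. -/
noncomputable def eOn {σ : Type} [DecidableEq σ] (s : Finset σ) (n : ℕ) : MvPolynomial σ ℤ :=
  ∑ t ∈ Finset.powersetCard n s, ∏ i ∈ t, X i

/-- The complete homogeneous symmetric polynomial `h_n` in the set of variables `s`. -/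
noncomputable def hOn {σ : Type} [DecidableEq σ] (s : Finset σ) (n : ℕ) : MvPolynomial σ ℤ :=
  ∑ m ∈ s.sym n, (m.1.map X).prod

/-- The ring `R = ℤ[x_1,…,x_r] ⊗ ℤ[y_1,…,y_r]^{S_r}`, presented as the polynomial ring in the
`x_i` (the `Sum.inl` variables) and the elementary symmetric polynomials `e_1(Y),…,e_r(Y)`
(the `Sum.inr` variables, via the fundamental theorem of symmetric polynomials).
`Evar r n` is the element corresponding to `e_n(Y)` (with `e_0(Y) = 1`). -/
noncomputable def Evar (r n : ℕ) : MvPolynomial (Fin r ⊕ Fin r) ℤ :=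
  if _h0 : n = 0 then 1 else if h : n ≤ r then X (Sum.inr ⟨n - 1, by omega⟩) else 0

/-- `QE r j` corresponds to `Q_{r,j} = e_{r-j}(Y - {x_{r-j},…,x_r})
= Σ_i (-1)^i e_{r-j-i}(Y) h_i(x_{r-j},…,x_r)`. -/
noncomputable def QE (r j : ℕ) : MvPolynomial (Fin r ⊕ Fin r) ℤ :=
  ∑ i ∈ Finset.range (r - j + 1),
    (-1) ^ i * Evar r (r - j - i) *
      hOn ((Finset.univ.filter fun t : Fin r => r - j - 1 ≤ (t : ℕ)).image Sum.inl) i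

namespace QEaux

/-- The set of "allowed" variables: all `x` variables and the `E` variables of index `< k`. -/
def Tset (r k : ℕ) : Set (Fin r ⊕ Fin r) :=
  Set.range Sum.inl ∪ Sum.inr '' {m : Fin r | (m : ℕ) < k}

/-- The lower-order part of `QE r j`. -/
noncomputable def Pj (r j : ℕ) : MvPolynomial (Fin r ⊕ Fin r) ℤ :=
  ∑ i ∈ Finset.Ioc 0 (r - j),
    (-1) ^ i * Evar r (r - j - i) *
      hOn ((Finset.univ.filter fun t : Fin r => r - j - 1 ≤ (t : ℕ)).image Sum.inl) i

lemma hOn_zero {σ : Type} [DecidableEq σ] (s : Finset σ) : hOn s 0 = 1 := by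
  simp [hOn, Finset.sym_zero]
  rfl

lemma QE_eq (r j : ℕ) (hj : j < r) :
    QE r j = X (Sum.inr ⟨r - 1 - j, by omega⟩) + Pj r j := by
  have h0 : r - j ≠ 0 := by omega
  have h1 : r - j ≤ r := by omega
  have : Finset.range (r - j + 1) = (Finset.Ioc 0 (r - j)).cons 0 (by simp) := by
    rw [← Finset.Icc_eq_cons_Ioc (Nat.zero_le _)]
    ext x; simp
  rw [QE, this, Finset.sum_cons, hOn_zero]
  have e : (⟨r - 1 - j, (by omega : r - 1 - j < r)⟩ : Fin r) = ⟨r - j - 1, by omega⟩ :=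
    Fin.ext (by simp; omega)
  have he : Evar r (r - j) = X (Sum.inr ⟨r - 1 - j, by omega⟩) := by
    rw [Evar, dif_neg h0, dif_pos h1, e]
  simp only [pow_zero, Nat.sub_zero, one_mul, mul_one]
  rw [Pj, he]

lemma Pj_mem (r j : ℕ) :
    Pj r j ∈ Algebra.adjoin ℤ (X '' Tset r (r - 1 - j)) := by
  apply Subalgebra.sum_mem
  intro i hi
  simp only [Finset.mem_Ioc] at hi
  apply Subalgebra.mul_mem
  apply Subalgebra.mul_mem
  · apply Subalgebra.pow_mem; apply Subalgebra.neg_mem; exact Subalgebra.one_mem _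
  · rw [Evar]
    by_cases h0 : r - j - i = 0
    · rw [dif_pos h0]; exact Subalgebra.one_mem _
    · rw [dif_neg h0, dif_pos (by omega)]
      apply Algebra.subset_adjoin
      refine ⟨Sum.inr ⟨r - j - i - 1, by omega⟩, ?_, rfl⟩
      exact Or.inr ⟨_, by simp; omega, rfl⟩
  · rw [hOn]
    apply Subalgebra.sum_mem
    intro m hm
    rw [Finset.mem_sym_iff] at hm
    apply Subalgebra.multiset_prod_mem  -- name?
    intro x hx
    rw [Multiset.mem_map] at hx
    obtain ⟨v, hv, rfl⟩ := hx
    have := hm v hv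
    rw [Finset.mem_image] at this
    obtain ⟨t, _, rfl⟩ := this
    exact Algebra.subset_adjoin ⟨Sum.inl t, Or.inl ⟨t, rfl⟩, rfl⟩


mutual
/-- The inverse change of variables, defined by strong recursion. -/
noncomputable def gfun (r : ℕ) (k : Fin r) : MvPolynomial (Fin r ⊕ Fin r) ℤ :=
  X (Sum.inr k) - aeval (tsub r (k : ℕ)) (Pj r (r - 1 - (k : ℕ)))
termination_by ((k : ℕ), 1)

/-- The truncated backward substitution. -/
noncomputable def tsub (r k : ℕ) : Fin r ⊕ Fin r → MvPolynomial (Fin r ⊕ Fin r) ℤ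
  | Sum.inl i => X (Sum.inl i)
  | Sum.inr m => if _h : (m : ℕ) < k then gfun r m else 0
termination_by v => (k, 0)
end

/-- Forward substitution. -/
noncomputable def asub (r : ℕ) : Fin r ⊕ Fin r → MvPolynomial (Fin r ⊕ Fin r) ℤ
  | Sum.inl i => X (Sum.inl i)
  | Sum.inr k => QE r (r - 1 - (k : ℕ))

/-- Backward substitution. -/
noncomputable def bsub (r : ℕ) : Fin r ⊕ Fin r → MvPolynomial (Fin r ⊕ Fin r) ℤ
  | Sum.inl i => X (Sum.inl i)
  | Sum.inr k => gfun r k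

lemma aeval_congr_on {σ : Type} {T : Set σ} {p : MvPolynomial σ ℤ}
    (hp : p ∈ Algebra.adjoin ℤ (X '' T)) {A : Type} [CommRing A]
    (f g : σ → A) (hfg : ∀ v ∈ T, f v = g v) : aeval f p = aeval g p := by
  induction hp using Algebra.adjoin_induction with
  | mem x hx => obtain ⟨v, hv, rfl⟩ := hx; simp [hfg v hv]
  | algebraMap r => simp
  | add x y _ _ hx hy => simp [hx, hy]
  | mul x y _ _ hx hy => simp [hx, hy]

lemma aeval_asub_gfun (r : ℕ) : ∀ (n : ℕ) (k : Fin r), (k : ℕ) < n →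
    aeval (asub r) (gfun r k) = X (Sum.inr k) := by
  intro n
  induction n with
  | zero => intro k hk; omega
  | succ n ih =>
    intro k hk
    rw [gfun, map_sub]
    have h1 : aeval (asub r) (X (Sum.inr k) : MvPolynomial (Fin r ⊕ Fin r) ℤ)
        = QE r (r - 1 - (k : ℕ)) := by simp [asub]
    rw [h1, ← AlgHom.comp_apply, comp_aeval]
    have h2 : (aeval fun i => aeval (asub r) (tsub r (k : ℕ) i))
        (Pj r (r - 1 - (k : ℕ))) = Pj r (r - 1 - (k : ℕ)) := by
      have hk' : r - 1 - (r - 1 - (k : ℕ)) = (k : ℕ) := by omega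
      have hmem := Pj_mem r (r - 1 - (k : ℕ))
      rw [hk'] at hmem
      refine (aeval_congr_on hmem _ X ?_).trans (aeval_X_left_apply _)
      rintro (i | m) hv
      · simp [tsub, asub]
      · simp only [Tset, Set.mem_union, Set.mem_range, Set.mem_image, Set.mem_setOf_eq] at hv
        obtain (⟨_, h⟩ | ⟨m', hm', hmm⟩) := hv
        · exact absurd h (by simp)
        · obtain rfl : m' = m := Sum.inr.inj hmm
          rw [tsub, dif_pos hm']
          exact ih _ (by omega)
    rw [h2, QE_eq r (r - 1 - (k : ℕ)) (by omega)]
    have : (⟨r - 1 - (r - 1 - (k : ℕ)), by omega⟩ : Fin r) = k := Fin.ext (by simp; omega)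
    rw [this]; ring

lemma aeval_bsub_QE (r j : ℕ) (hj : j < r) :
    aeval (bsub r) (QE r j) = X (Sum.inr ⟨r - 1 - j, by omega⟩) := by
  rw [QE_eq r j hj, map_add, aeval_X]
  show bsub r _ + _ = _
  rw [bsub, gfun]
  have hc : ((⟨r - 1 - j, by omega⟩ : Fin r) : ℕ) = r - 1 - j := rfl
  rw [hc]
  have hk : r - 1 - (r - 1 - j) = j := by omega
  rw [hk]
  have h3 : aeval (tsub r (r - 1 - j)) (Pj r j) = aeval (bsub r) (Pj r j) := by
    apply aeval_congr_on (Pj_mem r j)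
    rintro (i | m) hv
    · simp [tsub, bsub]
    · simp only [Tset, Set.mem_union, Set.mem_range, Set.mem_image, Set.mem_setOf_eq] at hv
      obtain (⟨_, h⟩ | ⟨m', hm', hmm⟩) := hv
      · exact absurd h (by simp)
      · obtain rfl : m' = m := Sum.inr.inj hmm
        rw [tsub, dif_pos hm', bsub]
  rw [h3]; ring

lemma aeval_asub_bsub (r : ℕ) (p : MvPolynomial (Fin r ⊕ Fin r) ℤ) :
    aeval (asub r) (aeval (bsub r) p) = p := by
  rw [← AlgHom.comp_apply]
  have : (aeval (asub r)).comp (aeval (bsub r))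
      = AlgHom.id ℤ (MvPolynomial (Fin r ⊕ Fin r) ℤ) := by
    apply MvPolynomial.algHom_ext
    rintro (i | k)
    · simp [bsub, asub]
    · simp only [AlgHom.comp_apply, aeval_X, AlgHom.id_apply]
      show aeval (asub r) (bsub r (Sum.inr k)) = _
      rw [bsub]
      exact aeval_asub_gfun r ((k : ℕ) + 1) k (by omega)
  rw [this]; rfl

lemma X_mul_mem_span {σ : Type} {S : Set σ} {v : σ} (hv : v ∉ S) {f : MvPolynomial σ ℤ}
    (h : X v * f ∈ Ideal.span (X '' S : Set (MvPolynomial σ ℤ))) :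
    f ∈ Ideal.span (X '' S : Set (MvPolynomial σ ℤ)) := by
  classical
  rw [mem_ideal_span_X_image] at h ⊢
  intro m hm
  have hm' : Finsupp.single v 1 + m ∈ (X v * f).support := by
    rw [support_X_mul]
    exact Finset.mem_map_of_mem _ hm
  obtain ⟨i, hi, hne⟩ := h _ hm'
  refine ⟨i, hi, fun h0 => hne ?_⟩
  have hvi : v ≠ i := fun e => hv (e ▸ hi)
  rw [Finsupp.add_apply, h0, Finsupp.single_apply, if_neg hvi, add_zero]

end QEaux


open QEaux in
/-- `Q_{r,0}, Q_{r,1}, …, Q_{r,r-1}` is a regular sequence in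
`R = ℤ[x_1,…,x_r] ⊗ ℤ[y_1,…,y_r]^{S_r}`: each `Q_{r,j}` is a nonzerodivisor modulo the ideal
generated by the previous ones. -/
theorem QE_regular_sequence (r j : ℕ) (hj : j < r)
    (f : MvPolynomial (Fin r ⊕ Fin r) ℤ)
    (hf : QE r j * f ∈ Ideal.span ((fun i => QE r i) '' {i | i < j})) :
    f ∈ Ideal.span ((fun i => QE r i) '' {i | i < j}) := by
  have hr : 0 < r := by omega
  set κ : ℕ → Fin r ⊕ Fin r := fun i => Sum.inr ⟨r - 1 - i, by omega⟩ with hκ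
  have h1 := Ideal.mem_map_of_mem (aeval (bsub r) : MvPolynomial (Fin r ⊕ Fin r) ℤ →ₐ[ℤ] MvPolynomial (Fin r ⊕ Fin r) ℤ) hf
  rw [Ideal.map_span, Set.image_image] at h1
  have himg : (fun i => aeval (bsub r) (QE r i)) '' {i | i < j}
      = X '' (κ '' {i | i < j}) := by
    rw [Set.image_image]
    apply Set.image_congr
    intro i hi
    exact aeval_bsub_QE r i (lt_trans hi hj)
  rw [himg, map_mul, aeval_bsub_QE r j hj] at h1
  have hv : κ j ∉ κ '' {i | i < j} := by
    rintro ⟨i, hi, he⟩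
    simp only [hκ, Sum.inr.injEq, Fin.mk.injEq] at he
    simp only [Set.mem_setOf_eq] at hi
    omega
  have h2 : aeval (bsub r) f ∈ Ideal.span (X '' (κ '' {i | i < j})
      : Set (MvPolynomial (Fin r ⊕ Fin r) ℤ)) := X_mul_mem_span hv h1
  have h3 := Ideal.mem_map_of_mem (aeval (asub r) : MvPolynomial (Fin r ⊕ Fin r) ℤ →ₐ[ℤ] MvPolynomial (Fin r ⊕ Fin r) ℤ) h2
  rw [Ideal.map_span] at h3
  rw [aeval_asub_bsub r f] at h3
  have hset : ⇑(aeval (asub r) : MvPolynomial (Fin r ⊕ Fin r) ℤ →ₐ[ℤ] MvPolynomial (Fin r ⊕ Fin r) ℤ) '' (X '' (κ '' {i | i < j}))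
      = (fun i => QE r i) '' {i | i < j} := by
    rw [Set.image_image, Set.image_image]
    apply Set.image_congr
    intro i hi
    simp only [Set.mem_setOf_eq] at hi
    rw [aeval_X]
    show asub r (κ i) = QE r i
    rw [hκ, asub]
    congr 1
    show r - 1 - (r - 1 - i) = i
    omega
  rw [hset] at h3
  exact h3
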